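/- Let a ∈ ℂ with a ≠ 1 and a ≠ −1. Then the quotient ℂ-vector space V = (L × L)/range(T) for the quartic curve u² = x⁴ − 2ax² + 1 has dimension exactly 5 over ℂ, with basis given by the classes ω₀ = [X⁻¹·u], ω₁ = [X⁻¹], ω₂ = [1], ω₃ = [X], ω₄ = [X²]. -/

import Mathlib

open LaurentPolynomial

/-- The linear map `T(f,g) = (p * D g + w * g, D f)` on `L × L`, encoding the distinguished
derivation of the superelliptic algebra (even part `L`, odd part `L * u`), where `p = P`
and `w` is the odd-weight term `u * u' = P'/2`. -/
noncomputable def Tgen (p w : LaurentPolynomial ℂ)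
    (D : LaurentPolynomial ℂ →ₗ[ℂ] LaurentPolynomial ℂ) :
    (LaurentPolynomial ℂ × LaurentPolynomial ℂ) →ₗ[ℂ]
      (LaurentPolynomial ℂ × LaurentPolynomial ℂ) where
  toFun fg := (p * D fg.2 + w * fg.2, D fg.1)
  map_add' x y := by
    ext
    · simp only [Prod.fst_add, Prod.snd_add, map_add]
      ring_nf
    · simp [Prod.snd_add]
  map_smul' c x := by
    ext
    · simp only [Prod.smul_fst, Prod.smul_snd, map_smul, smul_add, mul_smul_comm,
        RingHom.id_apply]
    · simp

/-- The derivation map for the quartic curve: `P = X^4 - 2aX^2 + 1`, `P'/2 = 2X^3 - 2aX`. -/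
noncomputable def Tquart (a : ℂ)
    (D : LaurentPolynomial ℂ →ₗ[ℂ] LaurentPolynomial ℂ) :
    (LaurentPolynomial ℂ × LaurentPolynomial ℂ) →ₗ[ℂ]
      (LaurentPolynomial ℂ × LaurentPolynomial ℂ) :=
  Tgen (T 4 - 2 * C a * T 2 + 1) (2 * T 3 - 2 * C a * T 1) D

namespace QuarticAux

/-! ### Sequences defining the annihilating functionals -/

/-- Legendre-type sequence for the odd-index annihilating functionals. -/
noncomputable def lam (a : ℂ) : ℕ → ℂ
  | 0 => 1
  | 1 => a
  | (k+2) => ((k:ℂ)+2)⁻¹ * ((2*(k:ℂ)+3)*a*lam a (k+1) - ((k:ℂ)+1)*lam a k)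

/-- Sequence for the even-index annihilating functionals. -/
noncomputable def mu (a m0 m1 : ℂ) : ℕ → ℂ
  | 0 => m0
  | 1 => m1
  | (k+2) => (2*(k:ℂ)+3)⁻¹ * (2*a*(2*(k:ℂ)+2)*mu a m0 m1 (k+1) - (2*(k:ℂ)+1)*mu a m0 m1 k)

lemma lam_zero (a : ℂ) : lam a 0 = 1 := rfl
lemma lam_one (a : ℂ) : lam a 1 = a := rfl
lemma mu_zero (a m0 m1 : ℂ) : mu a m0 m1 0 = m0 := rfl
lemma mu_one (a m0 m1 : ℂ) : mu a m0 m1 1 = m1 := rfl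

lemma lam_rec (a : ℂ) (k : ℕ) :
    ((k:ℂ)+2) * lam a (k+2) = (2*(k:ℂ)+3)*a*lam a (k+1) - ((k:ℂ)+1)*lam a k := by
  rw [lam, ← mul_assoc, mul_inv_cancel₀, one_mul]
  have : (((k+2:ℕ)):ℂ) ≠ 0 := Nat.cast_ne_zero.mpr (by omega)
  push_cast at this; exact this

lemma mu_rec (a m0 m1 : ℂ) (k : ℕ) :
    (2*(k:ℂ)+3) * mu a m0 m1 (k+2)
      = 2*a*(2*(k:ℂ)+2)*mu a m0 m1 (k+1) - (2*(k:ℂ)+1)*mu a m0 m1 k := by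
  rw [mu, ← mul_assoc, mul_inv_cancel₀, one_mul]
  intro h
  have h2 : (2*(k:ℂ)+3) = ((2*k+3 : ℕ) : ℂ) := by push_cast; ring
  rw [h2, Nat.cast_eq_zero] at h; omega

/-- odd positive sequence: the functional dual to `[T]`. -/
noncomputable def coddP (a : ℂ) : ℤ → ℂ :=
  fun m => if 0 < m ∧ m % 2 = 1 then lam a ((m-1)/2).toNat else 0

/-- odd negative sequence: the functional dual to `[T⁻¹]`. -/
noncomputable def coddM (a : ℂ) : ℤ → ℂ := fun m => coddP a (-m)

/-- even sequences: functionals dual to `[1]` and `[T²]`. -/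
noncomputable def ceven (a m0 m1 : ℂ) : ℤ → ℂ :=
  fun m => if m % 2 = 0 then mu a m0 m1 (m.natAbs / 2) else 0

/-- the functional dual to `[T⁻¹ u]`. -/
noncomputable def cpsi : ℤ → ℂ := fun m => if m = -1 then 1 else 0

/-- annihilation condition for the even part. -/
def IsAnn (a : ℂ) (c : ℤ → ℂ) : Prop :=
  ∀ n : ℤ, ((n:ℂ)+2) * c (n+3) - 2*a*((n:ℂ)+1) * c (n+1) + (n:ℂ) * c (n-1) = 0

lemma isAnn_coddP (a : ℂ) : IsAnn a (coddP a) := by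
  intro n
  rcases Int.even_or_odd n with ⟨t, ht⟩ | ⟨t, ht⟩
  · -- n = t + t, even
    subst ht
    rcases le_or_gt 1 t with h1 | h1
    · -- t ≥ 1
      obtain ⟨s, rfl⟩ : ∃ s : ℕ, t = (s:ℤ)+1 := ⟨(t-1).toNat, by omega⟩
      rw [show ((s:ℤ)+1) + ((s:ℤ)+1) + 3 = 2*(s:ℤ)+5 by ring,
        show ((s:ℤ)+1) + ((s:ℤ)+1) + 1 = 2*(s:ℤ)+3 by ring,
        show ((s:ℤ)+1) + ((s:ℤ)+1) - 1 = 2*(s:ℤ)+1 by ring]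
      rw [coddP, coddP, coddP, if_pos (by omega), if_pos (by omega), if_pos (by omega),
        show ((2*(s:ℤ)+5-1)/2).toNat = s+2 by omega,
        show ((2*(s:ℤ)+3-1)/2).toNat = s+1 by omega,
        show ((2*(s:ℤ)+1-1)/2).toNat = s by omega]
      push_cast
      linear_combination 2 * lam_rec a s
    rcases eq_or_lt_of_le (by omega : t ≤ 0) with h0 | h0
    · -- t = 0
      subst h0
      rw [show (0:ℤ) + 0 + 3 = 3 by ring, show (0:ℤ) + 0 + 1 = 1 by ring,
        show (0:ℤ) + 0 - 1 = -1 by ring]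
      rw [coddP, coddP, coddP, if_pos (by omega), if_pos (by omega), if_neg (by omega),
        show ((3-1:ℤ)/2).toNat = 1 by omega, show ((1-1:ℤ)/2).toNat = 0 by omega,
        lam_one, lam_zero]
      push_cast; ring
    rcases eq_or_lt_of_le (by omega : t ≤ -1) with hm1 | hm1
    · -- t = -1
      subst hm1
      rw [coddP, coddP, coddP, if_pos (by omega), if_neg (by omega), if_neg (by omega),
        show ((-1:ℤ) + -1 + 3 - 1)/2 = 0 by omega]
      push_cast; ring
    · -- t ≤ -2 : all zero
      rw [coddP, coddP, coddP, if_neg (by omega), if_neg (by omega), if_neg (by omega)]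
      ring
  · -- n = 2t+1, odd: all arguments even, everything vanishes
    subst ht
    rw [coddP, coddP, coddP, if_neg (by omega), if_neg (by omega), if_neg (by omega)]
    ring

lemma isAnn_coddM (a : ℂ) : IsAnn a (coddM a) := by
  intro n
  have h := isAnn_coddP a (-n-2)
  rw [show -n-2+3 = -(n-1) by ring, show -n-2+1 = -(n+1) by ring,
    show -n-2-1 = -(n+3) by ring] at h
  unfold coddM
  push_cast at h ⊢
  linear_combination -h

lemma isAnn_ceven (a m0 m1 : ℂ) : IsAnn a (ceven a m0 m1) := by
  intro n
  rcases Int.even_or_odd n with ⟨t, ht⟩ | ⟨t, ht⟩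
  · -- n even: all arguments odd, everything vanishes
    subst ht
    rw [ceven, ceven, ceven, if_neg (by omega), if_neg (by omega), if_neg (by omega)]
    ring
  · -- n = 2t+1
    subst ht
    rw [show 2*t+1+3 = 2*(t+2) by ring, show 2*t+1+1 = 2*(t+1) by ring,
      show 2*t+1-1 = 2*t by ring]
    rcases le_or_gt 0 t with h1 | h1
    · -- t ≥ 0
      obtain ⟨s, rfl⟩ : ∃ s : ℕ, t = (s:ℤ) := ⟨t.toNat, by omega⟩
      rw [ceven, ceven, ceven, if_pos (by omega), if_pos (by omega), if_pos (by omega),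
        show (2*((s:ℤ)+2)).natAbs / 2 = s+2 by omega,
        show (2*((s:ℤ)+1)).natAbs / 2 = s+1 by omega,
        show (2*(s:ℤ)).natAbs / 2 = s by omega]
      push_cast
      linear_combination mu_rec a m0 m1 s
    rcases eq_or_lt_of_le (by omega : t ≤ -1) with h0 | h0
    · subst h0
      rw [ceven, ceven, ceven, if_pos (by omega), if_pos (by omega), if_pos (by omega),
        show (2*((-1:ℤ)+2)).natAbs / 2 = 1 by omega,
        show (2*((-1:ℤ)+1)).natAbs / 2 = 0 by omega,
        show (2*(-1:ℤ)).natAbs / 2 = 1 by omega]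
      push_cast; ring
    rcases eq_or_lt_of_le (by omega : t ≤ -2) with h2 | h2
    · subst h2
      rw [ceven, ceven, ceven, if_pos (by omega), if_pos (by omega), if_pos (by omega),
        show (2*((-2:ℤ)+2)).natAbs / 2 = 0 by omega,
        show (2*((-2:ℤ)+1)).natAbs / 2 = 1 by omega,
        show (2*(-2:ℤ)).natAbs / 2 = 2 by omega]
      push_cast
      linear_combination -(mu_rec a m0 m1 0)
    · -- t ≤ -3
      obtain ⟨s, rfl⟩ : ∃ s : ℕ, t = -3-(s:ℤ) := ⟨(-3-t).toNat, by omega⟩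
      rw [ceven, ceven, ceven, if_pos (by omega), if_pos (by omega), if_pos (by omega),
        show (2*((-3-(s:ℤ))+2)).natAbs / 2 = s+1 by omega,
        show (2*((-3-(s:ℤ))+1)).natAbs / 2 = s+2 by omega,
        show (2*(-3-(s:ℤ))).natAbs / 2 = s+3 by omega]
      push_cast
      have h := mu_rec a m0 m1 (s+1)
      push_cast at h ⊢
      linear_combination -h

/-! ### The functionals -/

lemma smulC (r : ℂ) (f : LaurentPolynomial ℂ) : r • f = C r * f := by
  rw [C_eq_algebraMap, ← Algebra.smul_def]

lemma single_eq (n : ℤ) (r : ℂ) : (AddMonoidAlgebra.single n r : LaurentPolynomial ℂ) = r • T n := by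
  rw [single_eq_C_mul_T, C_eq_algebraMap, ← Algebra.smul_def]

lemma lp_induction (p : LaurentPolynomial ℂ → Prop) (h0 : p 0)
    (hadd : ∀ f g, p f → p g → p (f + g)) (hs : ∀ (n : ℤ) (r : ℂ), p (r • T n)) :
    ∀ f, p f := by
  intro f
  induction f using AddMonoidAlgebra.induction_linear with
  | zero => exact h0
  | add f g hf hg => exact hadd f g hf hg
  | single n r => have := hs n r; rwa [← single_eq] at this

/-- The linear functional on `L` attached to a coefficient sequence. -/
noncomputable def Phi (c : ℤ → ℂ) : LaurentPolynomial ℂ →ₗ[ℂ] ℂ :=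
  Finsupp.linearCombination ℂ c ∘ₗ (AddMonoidAlgebra.coeffLinearEquiv ℂ).toLinearMap

lemma Phi_T (c : ℤ → ℂ) (n : ℤ) : Phi c (T n) = c n := by
  have : Finsupp.linearCombination ℂ c (Finsupp.single n (1:ℂ)) = c n := by
    rw [Finsupp.linearCombination_single, one_smul]
  exact this

lemma Phi_one (c : ℤ → ℂ) : Phi c 1 = c 0 := by rw [← T_zero, Phi_T]

lemma Phi_smul (c : ℤ → ℂ) (r : ℂ) (f : LaurentPolynomial ℂ) :
    Phi c (r • f) = r * Phi c f := by rw [map_smul, smul_eq_mul]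

section WithD

variable (a : ℂ) (D : LaurentPolynomial ℂ →ₗ[ℂ] LaurentPolynomial ℂ)
  (hD : ∀ n : ℤ, D (T n) = (n : ℂ) • T (n - 1))

lemma Tquart_apply (f g : LaurentPolynomial ℂ) :
    Tquart a D (f, g)
      = ((T 4 - 2 * C a * T 2 + 1) * D g + (2 * T 3 - 2 * C a * T 1) * g, D f) := rfl

/-- `Q m` is the class of `(T m, 0)` in the quotient. -/
noncomputable def Q (m : ℤ) :
    (LaurentPolynomial ℂ × LaurentPolynomial ℂ) ⧸ LinearMap.range (Tquart a D) :=
  (LinearMap.range (Tquart a D)).mkQ (T m, 0)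

include hD

lemma Erel (n : ℤ) :
    (T 4 - 2 * C a * T 2 + 1) * D (T n) + (2 * T 3 - 2 * C a * T 1) * T n
      = ((n:ℂ)+2) • T (n+3) - (2*a*((n:ℂ)+1)) • T (n+1) + (n:ℂ) • T (n-1) := by
  have h1 : (T 4 : LaurentPolynomial ℂ) * T (n-1) = T (n+3) := by rw [← T_add]; congr 1; ring
  have h2 : (T 3 : LaurentPolynomial ℂ) * T n = T (n+3) := by rw [← T_add]; congr 1; ring
  have h3 : (T 2 : LaurentPolynomial ℂ) * T (n-1) = T (n+1) := by rw [← T_add]; congr 1; ring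
  have h4 : (T 1 : LaurentPolynomial ℂ) * T n = T (n+1) := by rw [← T_add]; congr 1; ring
  rw [hD n]
  simp only [smulC, map_add, map_mul, map_one, map_ofNat]
  linear_combination (C (n:ℂ)) * h1 + 2*h2 - 2*(C a)*(C (n:ℂ))*h3 - 2*(C a)*h4

/-- An `IsAnn` sequence kills the even component of the range. -/
lemma Phi_vanish (c : ℤ → ℂ) (hc : IsAnn a c) :
    ∀ g : LaurentPolynomial ℂ,
      Phi c ((T 4 - 2 * C a * T 2 + 1) * D g + (2 * T 3 - 2 * C a * T 1) * g) = 0 := by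
  apply lp_induction
  · simp
  · intro f g hf hg
    have h : (T 4 - 2 * C a * T 2 + 1) * D (f + g) + (2 * T 3 - 2 * C a * T 1) * (f + g)
        = ((T 4 - 2 * C a * T 2 + 1) * D f + (2 * T 3 - 2 * C a * T 1) * f)
          + ((T 4 - 2 * C a * T 2 + 1) * D g + (2 * T 3 - 2 * C a * T 1) * g) := by
      rw [map_add]; ring
    rw [h, map_add, hf, hg, add_zero]
  · intro n r
    rw [map_smul D, mul_smul_comm, mul_smul_comm, ← smul_add, Phi_smul]
    rw [Erel a D hD n]
    rw [map_add, map_sub, Phi_smul, Phi_smul, Phi_smul, Phi_T, Phi_T, Phi_T]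
    have h := hc n
    have h2 : (((n:ℂ)+2) * c (n+3) - 2*a*((n:ℂ)+1) * c (n+1)) + (n:ℂ) * c (n-1) = 0 := by
      linear_combination h
    rw [h2, mul_zero]

/-- `cpsi` kills the odd component of the range. -/
lemma Phi_cpsi_vanish : ∀ f : LaurentPolynomial ℂ, Phi cpsi (D f) = 0 := by
  apply lp_induction
  · simp
  · intro f g hf hg; rw [map_add, map_add, hf, hg, add_zero]
  · intro n r
    rw [map_smul D, hD n, Phi_smul, Phi_smul, Phi_T]
    rcases eq_or_ne n 0 with rfl | hn
    · simp
    · have : cpsi (n-1) = 0 := by unfold cpsi; rw [if_neg (by omega)]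
      rw [this]; ring

/-! ### Spanning -/

lemma Qrel (n : ℤ) :
    ((n:ℂ)+2) • Q a D (n+3) = (2*a*((n:ℂ)+1)) • Q a D (n+1) - (n:ℂ) • Q a D (n-1) := by
  have hmem : ((((n:ℂ)+2) • T (n+3) - (2*a*((n:ℂ)+1)) • T (n+1) + (n:ℂ) • T (n-1) :
      LaurentPolynomial ℂ), (0 : LaurentPolynomial ℂ)) ∈ LinearMap.range (Tquart a D) := by
    refine ⟨(0, T n), ?_⟩
    rw [Tquart_apply]
    refine Prod.ext ?_ ?_
    · exact Erel a D hD n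
    · exact map_zero D
  have h0 : (LinearMap.range (Tquart a D)).mkQ
      (((n:ℂ)+2) • T (n+3) - (2*a*((n:ℂ)+1)) • T (n+1) + (n:ℂ) • T (n-1), 0) = 0 := by
    rw [Submodule.mkQ_apply, Submodule.Quotient.mk_eq_zero]; exact hmem
  have hsplit : ((((n:ℂ)+2) • T (n+3) - (2*a*((n:ℂ)+1)) • T (n+1) + (n:ℂ) • T (n-1) :
        LaurentPolynomial ℂ), (0 : LaurentPolynomial ℂ))
      = ((n:ℂ)+2) • ((T (n+3) : LaurentPolynomial ℂ), (0 : LaurentPolynomial ℂ))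
        - (2*a*((n:ℂ)+1)) • ((T (n+1) : LaurentPolynomial ℂ), (0 : LaurentPolynomial ℂ))
        + (n:ℂ) • ((T (n-1) : LaurentPolynomial ℂ), (0 : LaurentPolynomial ℂ)) := by
    refine Prod.ext (by simp) (by simp)
  rw [hsplit, map_add, map_sub, map_smul, map_smul, map_smul] at h0
  have h1 : ((n:ℂ)+2) • Q a D (n+3) - (2*a*((n:ℂ)+1)) • Q a D (n+1) + (n:ℂ) • Q a D (n-1)
      = 0 := h0
  rw [eq_sub_iff_add_eq, ← sub_eq_zero]
  rw [← h1]; abel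

variable (M : Submodule ℂ
    ((LaurentPolynomial ℂ × LaurentPolynomial ℂ) ⧸ LinearMap.range (Tquart a D)))

lemma step_up (n : ℤ) (h2 : ((n:ℂ)+2) ≠ 0)
    (ha : Q a D (n+1) ∈ M) (hb : Q a D (n-1) ∈ M) : Q a D (n+3) ∈ M := by
  have hrel := Qrel a D hD n
  have : Q a D (n+3)
      = ((n:ℂ)+2)⁻¹ • ((2*a*((n:ℂ)+1)) • Q a D (n+1) - (n:ℂ) • Q a D (n-1)) := by
    rw [← hrel, smul_smul, inv_mul_cancel₀ h2, one_smul]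
  rw [this]
  exact M.smul_mem _ (M.sub_mem (M.smul_mem _ ha) (M.smul_mem _ hb))

lemma step_down (n : ℤ) (h2 : (n:ℂ) ≠ 0)
    (ha : Q a D (n+1) ∈ M) (hb : Q a D (n+3) ∈ M) : Q a D (n-1) ∈ M := by
  have hrel := Qrel a D hD n
  have h3 : (n:ℂ) • Q a D (n-1)
      = (2*a*((n:ℂ)+1)) • Q a D (n+1) - ((n:ℂ)+2) • Q a D (n+3) := by
    rw [eq_sub_iff_add_eq, add_comm, ← eq_sub_iff_add_eq]; exact hrel
  have : Q a D (n-1)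
      = (n:ℂ)⁻¹ • ((2*a*((n:ℂ)+1)) • Q a D (n+1) - ((n:ℂ)+2) • Q a D (n+3)) := by
    rw [← h3, smul_smul, inv_mul_cancel₀ h2, one_smul]
  rw [this]
  exact M.smul_mem _ (M.sub_mem (M.smul_mem _ ha) (M.smul_mem _ hb))

variable (hM1 : Q a D (-1) ∈ M) (hM2 : Q a D 0 ∈ M) (hM3 : Q a D 1 ∈ M) (hM4 : Q a D 2 ∈ M)

include hM1 hM2 hM3 hM4

lemma up_mem : ∀ k : ℕ, Q a D ((k:ℤ) - 1) ∈ M := by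
  intro k
  induction k using Nat.strong_induction_on with
  | _ k ih =>
    match k with
    | 0 => simpa using hM1
    | 1 => simpa using hM2
    | 2 => simpa using hM3
    | 3 => simpa using hM4
    | (j+4) =>
      have ha : Q a D ((j:ℤ)+1) ∈ M := by
        have := ih (j+2) (by omega)
        rwa [show ((j+2:ℕ):ℤ) - 1 = (j:ℤ)+1 by omega] at this
      have hb : Q a D ((j:ℤ)-1) ∈ M := by
        have := ih j (by omega)
        rwa [show ((j:ℕ):ℤ) - 1 = (j:ℤ)-1 by omega] at this
      have hne : (((j:ℤ):ℂ)+2) ≠ 0 := by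
        have : (((j+2:ℕ)):ℂ) ≠ 0 := Nat.cast_ne_zero.mpr (by omega)
        push_cast at this ⊢; exact this
      have := step_up a D hD M (j:ℤ) hne ha hb
      rwa [show ((j+4:ℕ):ℤ) - 1 = (j:ℤ)+3 by omega]

lemma ge_neg_one_mem : ∀ m : ℤ, -1 ≤ m → Q a D m ∈ M := by
  intro m hm
  have := up_mem a D hD M hM1 hM2 hM3 hM4 (m+1).toNat
  rwa [show (((m+1).toNat:ℕ):ℤ) - 1 = m by omega] at this

lemma down_mem : ∀ k : ℕ, Q a D (-2 - (k:ℤ)) ∈ M := by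
  intro k
  induction k using Nat.strong_induction_on with
  | _ k ih =>
    have hne : (((-1 - (k:ℤ) : ℤ)):ℂ) ≠ 0 := by
      rw [Int.cast_ne_zero]; omega
    have ha : Q a D ((-1 - (k:ℤ)) + 1) ∈ M := by
      rcases le_or_gt (k:ℤ) 1 with h | h
      · exact ge_neg_one_mem a D hD M hM1 hM2 hM3 hM4 _ (by omega)
      · have := ih (k-2) (by omega)
        rwa [show -2 - ((k-2:ℕ):ℤ) = (-1 - (k:ℤ)) + 1 by omega] at this
    have hb : Q a D ((-1 - (k:ℤ)) + 3) ∈ M := by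
      rcases le_or_gt (k:ℤ) 3 with h | h
      · exact ge_neg_one_mem a D hD M hM1 hM2 hM3 hM4 _ (by omega)
      · have := ih (k-4) (by omega)
        rwa [show -2 - ((k-4:ℕ):ℤ) = (-1 - (k:ℤ)) + 3 by omega] at this
    have := step_down a D hD M (-1 - (k:ℤ)) hne ha hb
    rwa [show (-1 - (k:ℤ)) - 1 = -2 - (k:ℤ) by ring] at this

lemma all_Q_mem : ∀ m : ℤ, Q a D m ∈ M := by
  intro m
  rcases le_or_gt (-1) m with h | h
  · exact ge_neg_one_mem a D hD M hM1 hM2 hM3 hM4 m h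
  · have := down_mem a D hD M hM1 hM2 hM3 hM4 (-2 - m).toNat
    rwa [show -2 - (((-2 - m).toNat:ℕ):ℤ) = m by omega] at this

end WithD

end QuarticAux

namespace QuarticAux

/-- The five representatives. -/
noncomputable def Vfam : Fin 5 → LaurentPolynomial ℂ × LaurentPolynomial ℂ :=
  ![(0, T (-1)), (T (-1), 0), (1, 0), (T 1, 0), (T 2, 0)]

/-- The five dual functionals. -/
noncomputable def Gfam (a : ℂ) :
    Fin 5 → ((LaurentPolynomial ℂ × LaurentPolynomial ℂ) →ₗ[ℂ] ℂ) :=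
  ![(Phi cpsi).comp (LinearMap.snd ℂ _ _),
    (Phi (coddM a)).comp (LinearMap.fst ℂ _ _),
    (Phi (ceven a 1 0)).comp (LinearMap.fst ℂ _ _),
    (Phi (coddP a)).comp (LinearMap.fst ℂ _ _),
    (Phi (ceven a 0 1)).comp (LinearMap.fst ℂ _ _)]

lemma coddP_neg1 (a : ℂ) : coddP a (-1) = 0 := by unfold coddP; rw [if_neg (by omega)]
lemma coddP_0 (a : ℂ) : coddP a 0 = 0 := by unfold coddP; rw [if_neg (by omega)]
lemma coddP_1 (a : ℂ) : coddP a 1 = 1 := by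
  unfold coddP
  rw [if_pos (by omega), show (((1:ℤ)-1)/2).toNat = 0 by omega, lam_zero]
lemma coddP_2 (a : ℂ) : coddP a 2 = 0 := by unfold coddP; rw [if_neg (by omega)]
lemma coddM_neg1 (a : ℂ) : coddM a (-1) = 1 := by
  unfold coddM; rw [show -(-1:ℤ) = 1 by ring, coddP_1]
lemma coddM_0 (a : ℂ) : coddM a 0 = 0 := by
  unfold coddM; rw [show -(0:ℤ) = 0 by ring, coddP_0]
lemma coddM_1 (a : ℂ) : coddM a 1 = 0 := by
  unfold coddM; rw [show -(1:ℤ) = -1 by ring, coddP_neg1]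
lemma coddM_2 (a : ℂ) : coddM a 2 = 0 := by
  unfold coddM coddP; rw [if_neg (by omega)]
lemma ceven_neg1 (a m0 m1 : ℂ) : ceven a m0 m1 (-1) = 0 := by
  unfold ceven; rw [if_neg (by omega)]
lemma ceven_0 (a m0 m1 : ℂ) : ceven a m0 m1 0 = m0 := by
  unfold ceven; rw [if_pos (by omega), show ((0:ℤ)).natAbs / 2 = 0 by omega, mu_zero]
lemma ceven_1 (a m0 m1 : ℂ) : ceven a m0 m1 1 = 0 := by
  unfold ceven; rw [if_neg (by omega)]
lemma ceven_2 (a m0 m1 : ℂ) : ceven a m0 m1 2 = m1 := by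
  unfold ceven; rw [if_pos (by omega), show ((2:ℤ)).natAbs / 2 = 1 by omega, mu_one]
lemma cpsi_neg1 : cpsi (-1) = 1 := by unfold cpsi; rw [if_pos rfl]

lemma Gval (a : ℂ) (i j : Fin 5) : Gfam a i (Vfam j) = if j = i then 1 else 0 := by
  fin_cases i <;> fin_cases j <;>
    simp [Gfam, Vfam, Phi_one, Phi_T, coddP_neg1, coddP_0, coddP_1, coddP_2,
      coddM_neg1, coddM_0, coddM_1, coddM_2, ceven_neg1, ceven_0, ceven_1, ceven_2,
      cpsi_neg1, cpsi]

end QuarticAux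

open QuarticAux in
theorem quartic_center_dim_five' (a : ℂ)
    (D : LaurentPolynomial ℂ →ₗ[ℂ] LaurentPolynomial ℂ)
    (hD : ∀ n : ℤ, D (T n) = (n : ℂ) • T (n - 1)) :
    Module.finrank ℂ
        ((LaurentPolynomial ℂ × LaurentPolynomial ℂ) ⧸ LinearMap.range (Tquart a D)) = 5 ∧
    ∃ b : Module.Basis (Fin 5) ℂ
        ((LaurentPolynomial ℂ × LaurentPolynomial ℂ) ⧸ LinearMap.range (Tquart a D)),
      b 0 = (LinearMap.range (Tquart a D)).mkQ (0, T (-1)) ∧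
      b 1 = (LinearMap.range (Tquart a D)).mkQ (T (-1), 0) ∧
      b 2 = (LinearMap.range (Tquart a D)).mkQ (1, 0) ∧
      b 3 = (LinearMap.range (Tquart a D)).mkQ (T 1, 0) ∧
      b 4 = (LinearMap.range (Tquart a D)).mkQ (T 2, 0) := by
  set R := LinearMap.range (Tquart a D) with hR
  -- the family of classes
  set W : Fin 5 → ((LaurentPolynomial ℂ × LaurentPolynomial ℂ) ⧸ R) :=
    fun i => R.mkQ (Vfam i) with hW
  -- linear independence
  have hGvan : ∀ i : Fin 5, ∀ z ∈ R, Gfam a i z = 0 := by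
    rintro i z ⟨y, rfl⟩
    have hy : Tquart a D y = Tquart a D (y.1, y.2) := rfl
    rw [hy, Tquart_apply]
    fin_cases i
    · exact Phi_cpsi_vanish D hD y.1
    · exact Phi_vanish a D hD _ (isAnn_coddM a) y.2
    · exact Phi_vanish a D hD _ (isAnn_ceven a 1 0) y.2
    · exact Phi_vanish a D hD _ (isAnn_coddP a) y.2
    · exact Phi_vanish a D hD _ (isAnn_ceven a 0 1) y.2
  have hli : LinearIndependent ℂ W := by
    rw [Fintype.linearIndependent_iff]
    intro g hg i
    have hmem : (∑ j, g j • Vfam j) ∈ R := by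
      rw [← Submodule.Quotient.mk_eq_zero, ← Submodule.mkQ_apply, map_sum]
      simpa only [map_smul] using hg
    have h1 : Gfam a i (∑ j, g j • Vfam j) = 0 := hGvan i _ hmem
    rw [map_sum] at h1
    simp only [map_smul, smul_eq_mul, Gval, mul_ite, mul_one, mul_zero] at h1
    rwa [Finset.sum_ite_eq' Finset.univ i g, if_pos (Finset.mem_univ i)] at h1
  -- spanning
  have hsp : ⊤ ≤ Submodule.span ℂ (Set.range W) := by
    set M := Submodule.span ℂ (Set.range W) with hM
    have hWmem : ∀ i, W i ∈ M := fun i => Submodule.subset_span ⟨i, rfl⟩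
    have hM1 : Q a D (-1) ∈ M := by
      have := hWmem 1
      simp only [hW, Vfam, Matrix.cons_val_one, Matrix.head_cons, Matrix.cons_val_zero] at this
      exact this
    have hM2 : Q a D 0 ∈ M := by
      have := hWmem 2
      simp only [hW, Vfam] at this
      rw [Q, T_zero]
      convert this using 2 <;> simp
    have hM3 : Q a D 1 ∈ M := by
      have := hWmem 3
      convert this using 2 <;> simp [hW, Vfam, Q]
    have hM4 : Q a D 2 ∈ M := by
      have := hWmem 4
      convert this using 2 <;> simp [hW, Vfam, Q]
    have hQ : ∀ m : ℤ, Q a D m ∈ M := all_Q_mem a D hD M hM1 hM2 hM3 hM4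
    have hfst : ∀ f : LaurentPolynomial ℂ, R.mkQ (f, 0) ∈ M := by
      apply lp_induction
      · rw [show ((0 : LaurentPolynomial ℂ), (0 : LaurentPolynomial ℂ))
          = (0 : LaurentPolynomial ℂ × LaurentPolynomial ℂ) from rfl, map_zero]
        exact M.zero_mem
      · intro f g hf hg
        rw [show ((f + g : LaurentPolynomial ℂ), (0 : LaurentPolynomial ℂ))
          = (f, (0:LaurentPolynomial ℂ)) + (g, (0:LaurentPolynomial ℂ)) by simp, map_add]
        exact M.add_mem hf hg
      · intro n r
        rw [show ((r • T n : LaurentPolynomial ℂ), (0 : LaurentPolynomial ℂ))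
          = r • ((T n : LaurentPolynomial ℂ), (0:LaurentPolynomial ℂ)) by simp, map_smul]
        exact M.smul_mem _ (hQ n)
    have hTodd : ∀ n : ℤ, R.mkQ (0, T n) ∈ M := by
      intro n
      rcases eq_or_ne n (-1) with rfl | hn
      · have := hWmem 0
        simpa only [hW, Vfam, Matrix.cons_val_zero] using this
      · have hmem : ((0 : LaurentPolynomial ℂ), (T n : LaurentPolynomial ℂ)) ∈ R := by
          refine ⟨(((n:ℂ)+1)⁻¹ • T (n+1), 0), ?_⟩
          rw [Tquart_apply]
          refine Prod.ext (by simp) ?_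
          show D (((n:ℂ)+1)⁻¹ • T (n+1)) = T n
          rw [map_smul, hD (n+1)]
          have hcast : (((n+1:ℤ)):ℂ) = (n:ℂ)+1 := by push_cast; ring
          rw [show (n+1-1 : ℤ) = n by ring, hcast, smul_smul, inv_mul_cancel₀, one_smul]
          rw [← hcast, Int.cast_ne_zero]
          omega
        rw [show R.mkQ (0, T n) = 0 by
          rw [Submodule.mkQ_apply, Submodule.Quotient.mk_eq_zero]; exact hmem]
        exact M.zero_mem
    have hsnd : ∀ g : LaurentPolynomial ℂ, R.mkQ (0, g) ∈ M := by
      apply lp_induction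
      · rw [show ((0 : LaurentPolynomial ℂ), (0 : LaurentPolynomial ℂ))
          = (0 : LaurentPolynomial ℂ × LaurentPolynomial ℂ) from rfl, map_zero]
        exact M.zero_mem
      · intro f g hf hg
        rw [show ((0 : LaurentPolynomial ℂ), (f + g : LaurentPolynomial ℂ))
          = ((0:LaurentPolynomial ℂ), f) + ((0:LaurentPolynomial ℂ), g) by simp, map_add]
        exact M.add_mem hf hg
      · intro n r
        rw [show ((0 : LaurentPolynomial ℂ), (r • T n : LaurentPolynomial ℂ))
          = r • ((0:LaurentPolynomial ℂ), (T n : LaurentPolynomial ℂ)) by simp, map_smul]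
        exact M.smul_mem _ (hTodd n)
    intro x _
    obtain ⟨y, rfl⟩ := Submodule.mkQ_surjective R x
    have : y = (y.1, 0) + (0, y.2) := by simp
    rw [this, map_add]
    exact M.add_mem (hfst y.1) (hsnd y.2)
  -- conclusion
  let b : Module.Basis (Fin 5) ℂ ((LaurentPolynomial ℂ × LaurentPolynomial ℂ) ⧸ R) :=
    Module.Basis.mk hli hsp
  have hb : ∀ i, b i = W i := fun i => Module.Basis.mk_apply hli hsp i
  constructor
  · rw [Module.finrank_eq_card_basis b, Fintype.card_fin]
  · refine ⟨b, ?_, ?_, ?_, ?_, ?_⟩ <;>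
      · rw [hb]
        simp [hW, Vfam]

open QuarticAux in
/-- for `a ≠ ±1`, the quotient `V = (L × L)/range(T)` for the quartic
curve `u² = x⁴ - 2ax² + 1` is 5-dimensional with basis
`ω₀ = [X⁻¹u]`, `ω₁ = [X⁻¹]`, `ω₂ = [1]`, `ω₃ = [X]`, `ω₄ = [X²]`. -/
theorem quartic_center_dim_five (a : ℂ) (ha1 : a ≠ 1) (ha2 : a ≠ -1)
    (D : LaurentPolynomial ℂ →ₗ[ℂ] LaurentPolynomial ℂ)
    (hD : ∀ n : ℤ, D (T n) = (n : ℂ) • T (n - 1)) :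
    Module.finrank ℂ
        ((LaurentPolynomial ℂ × LaurentPolynomial ℂ) ⧸ LinearMap.range (Tquart a D)) = 5 ∧
    ∃ b : Module.Basis (Fin 5) ℂ
        ((LaurentPolynomial ℂ × LaurentPolynomial ℂ) ⧸ LinearMap.range (Tquart a D)),
      b 0 = (LinearMap.range (Tquart a D)).mkQ (0, T (-1)) ∧
      b 1 = (LinearMap.range (Tquart a D)).mkQ (T (-1), 0) ∧
      b 2 = (LinearMap.range (Tquart a D)).mkQ (1, 0) ∧
      b 3 = (LinearMap.range (Tquart a D)).mkQ (T 1, 0) ∧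
      b 4 = (LinearMap.range (Tquart a D)).mkQ (T 2, 0) :=
  quartic_center_dim_five' a D hD
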